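/- Let (x, y) be a T-periodic solution of the system x' = a·x − b·x·y, y' = −c·y + d·x² − f(t) with x(t) > 0 for all t. Then for all t: √(ac/(bd))·exp(−(√T/2)·(b/c)·‖f‖₂) ≤ x(t) ≤ √(ac/(bd))·exp((√T/2)·(b/c)·‖f‖₂). -/

import Mathlib

open MeasureTheory intervalIntegral

/-- A continuous function with zero integral over a nondegenerate interval has a zero there. -/
lemma stmt6_aux_zero {T : ℝ} (hT : 0 < T) {g : ℝ → ℝ} (hg : Continuous g)
    (h : ∫ t in (0:ℝ)..T, g t = 0) : ∃ t₀ ∈ Set.Icc (0:ℝ) T, g t₀ = 0 := by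
  by_contra hcon
  push_neg at hcon
  have key : ∀ u v : ℝ, u ∈ Set.Icc (0:ℝ) T → v ∈ Set.Icc (0:ℝ) T → g u < 0 → 0 < g v → False := by
    intro u v hu hv hgu hgv
    have hsub : Set.uIcc u v ⊆ Set.Icc (0:ℝ) T := Set.uIcc_subset_Icc hu hv
    have h0 : (0:ℝ) ∈ Set.uIcc (g u) (g v) := Set.mem_uIcc.mpr (Or.inl ⟨hgu.le, hgv.le⟩)
    obtain ⟨s, hs, hgs⟩ := intermediate_value_uIcc hg.continuousOn h0
    exact hcon s (hsub hs) hgs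
  have h00 : (0:ℝ) ∈ Set.Icc (0:ℝ) T := ⟨le_refl 0, hT.le⟩
  rcases lt_or_gt_of_ne (hcon 0 h00) with h0 | h0
  · have hneg : ∀ r ∈ Set.Ioo (0:ℝ) T, 0 < -g r := by
      intro r hr
      have hrI : r ∈ Set.Icc (0:ℝ) T := ⟨hr.1.le, hr.2.le⟩
      rcases lt_or_gt_of_ne (hcon r hrI) with h' | h'
      · linarith
      · exact absurd (key 0 r h00 hrI h0 h') (fun hf => hf)
    have hpos : 0 < ∫ t in (0:ℝ)..T, -g t :=
      intervalIntegral_pos_of_pos_on (hg.neg.intervalIntegrable 0 T) hneg hT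
    rw [intervalIntegral.integral_neg, h] at hpos
    simp at hpos
  · have hneg : ∀ r ∈ Set.Ioo (0:ℝ) T, 0 < g r := by
      intro r hr
      have hrI : r ∈ Set.Icc (0:ℝ) T := ⟨hr.1.le, hr.2.le⟩
      rcases lt_or_gt_of_ne (hcon r hrI) with h' | h'
      · exact absurd (key r 0 hrI h00 h' h0) (fun hf => hf)
      · exact h'
    have hpos : 0 < ∫ t in (0:ℝ)..T, g t :=
      intervalIntegral_pos_of_pos_on (hg.intervalIntegrable 0 T) hneg hT
    rw [h] at hpos
    exact lt_irrefl 0 hpos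

theorem stmt6 (a b c d T : ℝ) (ha : 0 < a) (hb : 0 < b) (hc : 0 < c) (hd : 0 < d)
    (hT : 0 < T) (f : ℝ → ℝ) (hf : Continuous f) (hfper : Function.Periodic f T)
    (hfmean : ∫ t in (0 : ℝ)..T, f t = 0)
    (x y : ℝ → ℝ)
    (hx : ∀ t, HasDerivAt x (a * x t - b * x t * y t) t)
    (hy : ∀ t, HasDerivAt y (-c * y t + d * (x t) ^ 2 - f t) t)
    (hxper : Function.Periodic x T) (hyper : Function.Periodic y T)
    (hxpos : ∀ t, 0 < x t) :
    ∀ t,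
      Real.sqrt (a * c / (b * d)) *
          Real.exp (-(Real.sqrt T / 2) * (b / c) * Real.sqrt (∫ s in (0 : ℝ)..T, (f s) ^ 2))
        ≤ x t ∧
      x t ≤ Real.sqrt (a * c / (b * d)) *
          Real.exp ((Real.sqrt T / 2) * (b / c) * Real.sqrt (∫ s in (0 : ℝ)..T, (f s) ^ 2)) := by
  have hxc : Continuous x := continuous_iff_continuousAt.mpr fun t => (hx t).continuousAt
  have hyc : Continuous y := continuous_iff_continuousAt.mpr fun t => (hy t).continuousAt
  set u : ℝ → ℝ := fun t => a - b * y t with hu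
  have huc : Continuous u := continuous_const.sub (continuous_const.mul hyc)
  have hlog : ∀ t, HasDerivAt (fun r => Real.log (x r)) (u t) t := by
    intro t
    have h := (hx t).log (ne_of_gt (hxpos t))
    convert h using 1
    have hxne : x t ≠ 0 := ne_of_gt (hxpos t)
    field_simp [hu]
    ring
  -- FTC 1 : mean of u is zero
  have hxT : x T = x 0 := by simpa using hxper 0
  have hyT : y T = y 0 := by simpa using hyper 0
  have hI1 : ∫ t in (0:ℝ)..T, u t = 0 := by
    rw [integral_eq_sub_of_hasDerivAt (fun r _ => hlog r) (huc.intervalIntegrable 0 T), hxT,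
      sub_self]
  have hI2 : ∫ t in (0:ℝ)..T, (-c * y t + d * (x t) ^ 2 - f t) = 0 := by
    rw [integral_eq_sub_of_hasDerivAt (fun r _ => hy r)
      ((((continuous_const.mul hyc).add (continuous_const.mul (hxc.pow 2))).sub
        hf).intervalIntegrable 0 T), hyT, sub_self]
  -- Energy identity
  set E : ℝ → ℝ := fun t => (a - b * y t) * (a - b * y t) / 2
      + (b * d * (x t * x t) / 2 - a * c * Real.log (x t)) with hE
  have hEd : ∀ t, HasDerivAt E (b * f t * u t - c * (u t) ^ 2) t := by
    intro t
    have h1 : HasDerivAt (fun r => a - b * y r) (-(b * (-c * y t + d * (x t) ^ 2 - f t))) t :=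
      ((hy t).const_mul b).const_sub a
    have h2 := (h1.mul h1).div_const 2
    have h3 := (((hx t).mul (hx t)).const_mul (b * d)).div_const 2
    have h4 := (hlog t).const_mul (a * c)
    have h5 := h2.add (h3.sub h4)
    refine h5.congr_deriv ?_
    simp only [hu]
    ring
  have hI3 : ∫ t in (0:ℝ)..T, (b * f t * u t - c * (u t) ^ 2) = 0 := by
    rw [integral_eq_sub_of_hasDerivAt (fun r _ => hEd r)
      (((((continuous_const.mul hf).mul huc).sub
        (continuous_const.mul (huc.pow 2)))).intervalIntegrable 0 T)]
    simp only [hE, hxT, hyT, sub_self]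
  -- notation for the key integrals
  set F : ℝ := ∫ s in (0:ℝ)..T, (f s) ^ 2 with hFdef
  set U : ℝ := ∫ s in (0:ℝ)..T, (u s) ^ 2 with hUdef
  set A : ℝ := ∫ s in (0:ℝ)..T, |u s| with hAdef
  have hFnn : 0 ≤ F := integral_nonneg hT.le fun r _ => sq_nonneg _
  have hUnn : 0 ≤ U := integral_nonneg hT.le fun r _ => sq_nonneg _
  have hAnn : 0 ≤ A := integral_nonneg hT.le fun r _ => abs_nonneg _
  -- Cauchy-Schwarz I : c^2 U ≤ b^2 F
  have hCS : c ^ 2 * U ≤ b ^ 2 * F := by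
    have hnn : 0 ≤ ∫ r in (0:ℝ)..T, (b * f r - c * u r) ^ 2 :=
      integral_nonneg hT.le fun r _ => sq_nonneg _
    have hsplit : ∫ r in (0:ℝ)..T, (b * f r - c * u r) ^ 2
        = b ^ 2 * F - 2 * c * (∫ r in (0:ℝ)..T, (b * f r * u r - c * (u r) ^ 2)) - c ^ 2 * U := by
      rw [hFdef, hUdef, ← intervalIntegral.integral_const_mul, ← intervalIntegral.integral_const_mul, ← intervalIntegral.integral_const_mul,
        ← integral_sub (f := fun r => b ^ 2 * f r ^ 2) (g := fun r => 2 * c * (b * f r * u r - c * u r ^ 2))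
          (((continuous_const.mul (hf.pow 2))).intervalIntegrable 0 T)
          ((continuous_const.mul (((continuous_const.mul hf).mul huc).sub
            (continuous_const.mul (huc.pow 2)))).intervalIntegrable 0 T),
        ← integral_sub (f := fun r => b ^ 2 * f r ^ 2 - 2 * c * (b * f r * u r - c * u r ^ 2))
          (g := fun r => c ^ 2 * u r ^ 2) (((continuous_const.mul (hf.pow 2)).sub
            (continuous_const.mul (((continuous_const.mul hf).mul huc).sub
              (continuous_const.mul (huc.pow 2))))).intervalIntegrable 0 T)
          ((continuous_const.mul (huc.pow 2)).intervalIntegrable 0 T)]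
      exact integral_congr fun r _ => by ring
    rw [hsplit, hI3] at hnn
    linarith
  -- Cauchy-Schwarz II : A^2 ≤ T * U
  have hAU : A ^ 2 ≤ T * U := by
    set lam : ℝ := A / T with hlam
    have hlamT : lam * T = A := div_mul_cancel₀ A hT.ne'
    have hnn : 0 ≤ ∫ r in (0:ℝ)..T, (|u r| - lam) ^ 2 :=
      integral_nonneg hT.le fun r _ => sq_nonneg _
    have hsplit : ∫ r in (0:ℝ)..T, (|u r| - lam) ^ 2
        = U - 2 * lam * A + lam ^ 2 * T := by
      have e1 : ∀ r, (|u r| - lam) ^ 2 = (u r) ^ 2 - 2 * lam * |u r| + lam ^ 2 := by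
        intro r
        rw [sub_sq, sq_abs]
        ring
      rw [hUdef, hAdef, ← intervalIntegral.integral_const_mul]
      rw [← integral_sub (f := fun r => u r ^ 2) (g := fun r => 2 * lam * |u r|) ((huc.pow 2).intervalIntegrable 0 T)
          ((continuous_const.mul huc.abs).intervalIntegrable 0 T),
        show lam ^ 2 * T = ∫ r in (0:ℝ)..T, lam ^ 2 by
          rw [intervalIntegral.integral_const, smul_eq_mul]; ring,
        ← integral_add (f := fun r => u r ^ 2 - 2 * lam * |u r|) (g := fun _ => lam ^ 2) ((((huc.pow 2)).sub (continuous_const.mul huc.abs)).intervalIntegrable 0 T)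
          ((continuous_const (y := lam ^ 2)).intervalIntegrable 0 T)]
      exact integral_congr fun r _ => e1 r
    rw [hsplit] at hnn
    nlinarith [hnn, hlamT, hT]
  -- A ≤ √T * (b/c) * √F
  have hA2 : A ≤ Real.sqrt T * (b / c) * Real.sqrt F := by
    have hK : (0:ℝ) ≤ Real.sqrt T * (b / c) * Real.sqrt F :=
      mul_nonneg (mul_nonneg (Real.sqrt_nonneg _) (div_nonneg hb.le hc.le)) (Real.sqrt_nonneg _)
    have hK2 : (Real.sqrt T * (b / c) * Real.sqrt F) ^ 2 = T * (b / c) ^ 2 * F := by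
      rw [mul_pow, mul_pow, Real.sq_sqrt hT.le, Real.sq_sqrt hFnn]
    have hsq : A ^ 2 ≤ (Real.sqrt T * (b / c) * Real.sqrt F) ^ 2 := by
      rw [hK2]
      have hc2 : (0:ℝ) < c ^ 2 := by positivity
      have heq : T * (b / c) ^ 2 * F = T * b ^ 2 * F / c ^ 2 := by
        field_simp
      rw [heq, le_div_iff₀ hc2]
      nlinarith [mul_le_mul_of_nonneg_left hCS hT.le, mul_le_mul_of_nonneg_right hAU hc2.le]
    calc A = Real.sqrt (A ^ 2) := (Real.sqrt_sq hAnn).symm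
      _ ≤ Real.sqrt ((Real.sqrt T * (b / c) * Real.sqrt F) ^ 2) := Real.sqrt_le_sqrt hsq
      _ = Real.sqrt T * (b / c) * Real.sqrt F := Real.sqrt_sq hK
  -- mean of b*d*x^2 - a*c is zero
  set Y : ℝ := ∫ s in (0:ℝ)..T, y s with hYdef
  set X2 : ℝ := ∫ s in (0:ℝ)..T, (x s) ^ 2 with hX2def
  have e1 : a * T - b * Y = 0 := by
    have : ∫ t in (0:ℝ)..T, u t = (∫ t in (0:ℝ)..T, (a:ℝ)) - ∫ t in (0:ℝ)..T, b * y t := by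
      rw [← integral_sub (f := fun _ => a) (g := fun t => b * y t) (intervalIntegrable_const) ((continuous_const.mul hyc).intervalIntegrable 0 T)]
    rw [this] at hI1
    rw [intervalIntegral.integral_const, intervalIntegral.integral_const_mul, smul_eq_mul] at hI1
    rw [hYdef]
    linarith [hI1]
  have e2 : -c * Y + d * X2 = 0 := by
    have hsp : ∫ t in (0:ℝ)..T, (-c * y t + d * (x t) ^ 2 - f t)
        = (∫ t in (0:ℝ)..T, -c * y t) + (∫ t in (0:ℝ)..T, d * (x t) ^ 2)
          - ∫ t in (0:ℝ)..T, f t := by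
      rw [← integral_add (f := fun t => -c * y t) (g := fun t => d * x t ^ 2) ((continuous_const.mul hyc).intervalIntegrable 0 T)
        ((continuous_const.mul (hxc.pow 2)).intervalIntegrable 0 T),
        ← integral_sub (f := fun t => -c * y t + d * x t ^ 2) (g := f) (((continuous_const.mul hyc).add
          (continuous_const.mul (hxc.pow 2))).intervalIntegrable 0 T)
          (hf.intervalIntegrable 0 T)]
    rw [hsp, hfmean, intervalIntegral.integral_const_mul, intervalIntegral.integral_const_mul] at hI2
    rw [hYdef, hX2def]
    linarith [hI2]
  have hI4 : ∫ t in (0:ℝ)..T, (b * d * (x t) ^ 2 - a * c) = 0 := by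
    have hsp : ∫ t in (0:ℝ)..T, (b * d * (x t) ^ 2 - a * c)
        = (∫ t in (0:ℝ)..T, b * d * (x t) ^ 2) - ∫ t in (0:ℝ)..T, (a * c : ℝ) := by
      rw [← integral_sub (f := fun t => b * d * x t ^ 2) (g := fun _ => a * c) ((continuous_const.mul (hxc.pow 2)).intervalIntegrable 0 T)
        intervalIntegrable_const]
    rw [hsp, intervalIntegral.integral_const_mul, intervalIntegral.integral_const, smul_eq_mul]
    rw [← hX2def]
    linear_combination b * e2 - c * e1
  obtain ⟨t₀, _, hgt₀⟩ := stmt6_aux_zero hT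
    ((continuous_const.mul (hxc.pow 2)).sub continuous_const) hI4
  set R : ℝ := Real.sqrt (a * c / (b * d)) with hRdef
  have hbd : (0:ℝ) < b * d := mul_pos hb hd
  have hRpos : 0 < R := Real.sqrt_pos.mpr (div_pos (mul_pos ha hc) hbd)
  have hxt₀ : x t₀ = R := by
    have hsq : (x t₀) ^ 2 = a * c / (b * d) := by
      field_simp
      linarith [show b * d * x t₀ ^ 2 - a * c = 0 from hgt₀]
    rw [hRdef, ← hsq, Real.sqrt_sq (hxpos t₀).le]
  -- pointwise bound
  intro t
  set B : ℝ := Real.sqrt T / 2 * (b / c) * Real.sqrt F with hBdef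
  have hW : |Real.log (x t) - Real.log R| ≤ B := by
    set n : ℤ := ⌈(t - t₀) / T⌉ with hn
    have hn1 : (t - t₀) / T ≤ (n : ℝ) := Int.le_ceil _
    have hn2 : (n : ℝ) < (t - t₀) / T + 1 := Int.ceil_lt_add_one _
    set s : ℝ := t₀ + (n : ℝ) * T with hs
    have hts : t ≤ s := by
      rw [div_le_iff₀ hT] at hn1
      rw [hs]; linarith
    have hst : s ≤ t + T := by
      have h2 : (n : ℝ) * T ≤ ((t - t₀) / T + 1) * T := mul_le_mul_of_nonneg_right hn2.le hT.le
      rw [add_mul, div_mul_cancel₀ _ hT.ne', one_mul] at h2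
      rw [hs]; linarith
    have hxs : x s = R := by
      rw [hs, (hxper.int_mul n) t₀, hxt₀]
    have hseg1 : ∫ r in t..s, u r = Real.log R - Real.log (x t) := by
      rw [integral_eq_sub_of_hasDerivAt (fun r _ => hlog r) (huc.intervalIntegrable t s), hxs]
    have hseg2 : ∫ r in s..(t + T), u r = Real.log (x t) - Real.log R := by
      rw [integral_eq_sub_of_hasDerivAt (fun r _ => hlog r) (huc.intervalIntegrable s (t + T)),
        hxs, hxper t]
    have b1 : |Real.log (x t) - Real.log R| ≤ ∫ r in t..s, |u r| := by
      have := intervalIntegral.abs_integral_le_integral_abs (f := u) (μ := volume) hts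
      rw [hseg1, abs_sub_comm] at this
      exact this
    have b2 : |Real.log (x t) - Real.log R| ≤ ∫ r in s..(t + T), |u r| := by
      have := intervalIntegral.abs_integral_le_integral_abs (f := u) (μ := volume) hst
      rw [hseg2] at this
      exact this
    have hadj : (∫ r in t..s, |u r|) + ∫ r in s..(t + T), |u r| = ∫ r in t..(t + T), |u r| :=
      integral_add_adjacent_intervals (huc.abs.intervalIntegrable t s)
        (huc.abs.intervalIntegrable s (t + T))
    have huper : Function.Periodic (fun r => |u r|) T := by
      intro r
      simp only [hu, hyper r]
    have hper : (∫ r in t..(t + T), |u r|) = A := by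
      rw [hAdef]
      have := huper.intervalIntegral_add_eq t 0
      rw [zero_add] at this
      exact this
    have h2B : Real.sqrt T * (b / c) * Real.sqrt F = 2 * B := by rw [hBdef]; ring
    have : 2 * |Real.log (x t) - Real.log R| ≤ 2 * B := by
      rw [← h2B]
      calc 2 * |Real.log (x t) - Real.log R|
          = |Real.log (x t) - Real.log R| + |Real.log (x t) - Real.log R| := by ring
        _ ≤ (∫ r in t..s, |u r|) + ∫ r in s..(t + T), |u r| := add_le_add b1 b2
        _ = A := by rw [hadj, hper]
        _ ≤ Real.sqrt T * (b / c) * Real.sqrt F := hA2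
    linarith
  obtain ⟨hW1, hW2⟩ := abs_le.mp hW
  have hxt : x t = Real.exp (Real.log (x t)) := (Real.exp_log (hxpos t)).symm
  have hRexp : R = Real.exp (Real.log R) := (Real.exp_log hRpos).symm
  constructor
  · have hexp : R * Real.exp (-(Real.sqrt T / 2) * (b / c) * Real.sqrt F)
        = Real.exp (Real.log R + -B) := by
      rw [Real.exp_add, ← hRexp, hBdef]
      ring_nf
    rw [hexp, hxt]
    exact Real.exp_le_exp.mpr (by linarith)
  · have hexp : R * Real.exp (Real.sqrt T / 2 * (b / c) * Real.sqrt F)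
        = Real.exp (Real.log R + B) := by
      rw [Real.exp_add, ← hRexp, hBdef]
    rw [hexp, hxt]
    exact Real.exp_le_exp.mpr (by linarith)
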